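/- Let N ≥ 0, h ∈ ℝ, x ∈ ℝ, let g : ℝ → ℝ and w_0, …, w_N : ℝ → ℝ be real-analytic in a neighborhood of x, and suppose that ∑_{n=0}^N ε^n w_n(x + εh) = g(x + εh) + o(ε^N) as ε → 0. Then w_0(x) = g(x) and, for every 1 ≤ m ≤ N, w_m(x) = (h^m/m!) g^{(m)}(x) − ∑_{k=1}^{m} (h^k/k!) w_{m−k}^{(k)}(x). -/

import Mathlib

open Asymptotics Filter

lemma poly_coeff_zero (M N : ℕ) (A : ℕ → ℝ)
    (hA : (fun ε : ℝ => ∑ j ∈ Finset.range M, A j * ε ^ j) =o[nhds 0] fun ε : ℝ => ε ^ N) :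
    ∀ m, m ≤ N → m < M → A m = 0 := by
  intro m
  induction m using Nat.strong_induction_on with
  | _ m ih =>
    intro hmN hmM
    set S : ℝ → ℝ := fun ε => ∑ j ∈ Finset.range (M - m), A (m + j) * ε ^ j with hS
    have key : ∀ ε : ℝ, (∑ j ∈ Finset.range M, A j * ε ^ j) = ε ^ m * S ε := by
      intro ε
      have h1 : ∑ j ∈ Finset.range M, A j * ε ^ j
          = ∑ j ∈ Finset.Ico m M, A j * ε ^ j := by
        rw [Finset.range_eq_Ico, ← Finset.sum_Ico_consecutive _ (Nat.zero_le m) hmM.le]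
        have : ∑ j ∈ Finset.Ico 0 m, A j * ε ^ j = 0 := by
          apply Finset.sum_eq_zero
          intro j hj
          simp only [Finset.mem_Ico] at hj
          rw [ih j hj.2 (hj.2.le.trans hmN) (hj.2.trans hmM), zero_mul]
        rw [this, zero_add]
      rw [h1, hS, Finset.sum_Ico_eq_sum_range, Finset.mul_sum]
      apply Finset.sum_congr rfl
      intro j hj
      rw [pow_add]
      ring
    have h2 : (fun ε : ℝ => ε ^ m * S ε) =o[nhds 0] fun ε : ℝ => ε ^ m := by
      have h0 : (fun ε : ℝ => ∑ j ∈ Finset.range M, A j * ε ^ j) =o[nhds 0]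
          fun ε : ℝ => ε ^ m := by
        refine hA.trans_isBigO ?_
        rw [isBigO_iff]
        refine ⟨1, ?_⟩
        filter_upwards [Metric.ball_mem_nhds (0 : ℝ) one_pos] with ε hε
        rw [Metric.mem_ball, Real.dist_eq, sub_zero] at hε
        simp only [norm_pow, Real.norm_eq_abs, one_mul]
        exact pow_le_pow_of_le_one (abs_nonneg _) hε.le hmN
      simpa [funext key] using h0
    have h3 : Tendsto S (nhdsWithin 0 {(0:ℝ)}ᶜ) (nhds 0) := by
      have h4 := h2.tendsto_div_nhds_zero.mono_left (nhdsWithin_le_nhds (s := {(0:ℝ)}ᶜ))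
      refine h4.congr' ?_
      filter_upwards [self_mem_nhdsWithin] with ε hε
      have hε' : ε ≠ 0 := hε
      field_simp
    have h5 : Tendsto S (nhdsWithin 0 {(0:ℝ)}ᶜ) (nhds (S 0)) := by
      have hc : Continuous S := by
        apply continuous_finset_sum
        intro j _
        exact continuous_const.mul (continuous_pow j)
      exact (hc.tendsto 0).mono_left nhdsWithin_le_nhds
    have h6 : S 0 = A m := by
      show ∑ j ∈ Finset.range (M - m), A (m + j) * (0:ℝ) ^ j = A m
      rw [show M - m = (M - m - 1) + 1 by omega, Finset.sum_range_succ']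
      simp
    rw [← h6]
    exact tendsto_nhds_unique h5 h3

lemma taylor_bigO (f : ℝ → ℝ) (x h : ℝ) (hf : AnalyticAt ℝ f x) (K : ℕ) :
    (fun ε : ℝ => f (x + ε * h) -
        ∑ k ∈ Finset.range K, (iteratedDeriv k f x / k.factorial) * (ε * h) ^ k)
      =O[nhds 0] fun ε : ℝ => ε ^ K := by
  obtain ⟨p, hp⟩ := hf
  have hc : ∀ k, p.coeff k = iteratedDeriv k f x / k.factorial := by
    intro k
    obtain ⟨r, hpr⟩ := hp
    have h1 := hpr.factorial_smul (1 : ℝ) k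
    rw [iteratedDeriv_eq_iteratedFDeriv]
    rw [← h1]
    simp only [FormalMultilinearSeries.coeff, smul_eq_mul]
    rw [show (p k fun _ => (1:ℝ)) = p k 1 from rfl]
    field_simp
    rw [nsmul_eq_mul, mul_comm]
  have h1 := hp.isBigO_sub_partialSum_pow K
  have htend : Tendsto (fun ε : ℝ => ε * h) (nhds 0) (nhds 0) := by
    have := (tendsto_id (x := nhds (0:ℝ))).mul_const h
    simpa using this
  have h2 := h1.comp_tendsto htend
  have h3 : (fun ε : ℝ => ‖ε * h‖ ^ K) =O[nhds 0] fun ε : ℝ => ε ^ K := by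
    rw [isBigO_iff]
    refine ⟨|h| ^ K, Eventually.of_forall fun ε => ?_⟩
    simp [abs_mul, mul_pow, mul_comm]
  refine (IsBigO.trans ?_ h3)
  refine h2.congr_left fun ε => ?_
  simp only [Function.comp_apply, FormalMultilinearSeries.partialSum]
  congr 1
  apply Finset.sum_congr rfl
  intro k _
  rw [FormalMultilinearSeries.apply_eq_pow_smul_coeff, hc, smul_eq_mul]
  ring

/-- Taylor-matching identity. If `g` and `w₀,…,w_N` are real-analytic
near `x` and `∑_{n=0}^N εⁿ wₙ(x+εh) = g(x+εh) + o(ε^N)` as `ε → 0`, then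
`w₀(x) = g(x)` and for `1 ≤ m ≤ N`,
`w_m(x) = (h^m/m!) g^{(m)}(x) − ∑_{k=1}^m (h^k/k!) w_{m−k}^{(k)}(x)`. -/
theorem stmt_13 (N : ℕ) (h x : ℝ) (g : ℝ → ℝ) (w : ℕ → ℝ → ℝ)
    (hg : AnalyticAt ℝ g x) (hw : ∀ n ≤ N, AnalyticAt ℝ (w n) x)
    (hmatch :
      (fun ε : ℝ =>
          (∑ n ∈ Finset.range (N + 1), ε ^ n * w n (x + ε * h)) - g (x + ε * h))
        =o[nhds 0] fun ε : ℝ => ε ^ N) :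
    w 0 x = g x ∧
    ∀ m, 1 ≤ m → m ≤ N →
      w m x = (h ^ m / m.factorial) * iteratedDeriv m g x
        - ∑ k ∈ Finset.Icc 1 m, (h ^ k / k.factorial) * iteratedDeriv k (w (m - k)) x := by
  classical
  set c : ℕ → ℕ → ℝ := fun n k => iteratedDeriv k (w n) x / k.factorial with hcdef
  set d : ℕ → ℝ := fun k => iteratedDeriv k g x / k.factorial with hddef
  set A : ℕ → ℝ := fun m =>
    (∑ q ∈ (Finset.range (N+1) ×ˢ Finset.range (N+1)).filter (fun q => q.1 + q.2 = m),
      c q.1 q.2 * h ^ q.2) - (if m < N + 1 then d m * h ^ m else 0) with hAdef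
  -- ε^n is bounded near 0
  have hbdd : ∀ n : ℕ, (fun ε : ℝ => ε ^ n) =O[nhds 0] fun _ : ℝ => (1:ℝ) := by
    intro n
    rw [isBigO_iff]
    refine ⟨1, ?_⟩
    filter_upwards [Metric.ball_mem_nhds (0:ℝ) one_pos] with ε hε
    rw [Metric.mem_ball, Real.dist_eq, sub_zero] at hε
    simp only [norm_pow, Real.norm_eq_abs, norm_one, mul_one]
    exact pow_le_one₀ (abs_nonneg _) hε.le
  -- the correction term is O(ε^{N+1})
  have hcorr : (fun ε : ℝ =>
      (∑ n ∈ Finset.range (N+1),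
        ε ^ n * (w n (x + ε*h) - ∑ k ∈ Finset.range (N+1), c n k * (ε*h)^k))
        - (g (x + ε*h) - ∑ k ∈ Finset.range (N+1), d k * (ε*h)^k))
      =O[nhds 0] fun ε : ℝ => ε ^ (N+1) := by
    apply IsBigO.sub
    · apply Asymptotics.IsBigO.fun_sum
      intro n hn
      have hn' : n ≤ N := Nat.lt_succ_iff.mp (Finset.mem_range.mp hn)
      have h1 := (hbdd n).mul (taylor_bigO (w n) x h (hw n hn') (N+1))
      simpa using h1
    · exact taylor_bigO g x h hg (N+1)
  -- ε^{N+1} = o(ε^N)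
  have hεK : (fun ε : ℝ => ε ^ (N+1)) =o[nhds 0] fun ε : ℝ => ε ^ N := by
    have h1 : (fun ε : ℝ => ε) =o[nhds 0] fun _ : ℝ => (1:ℝ) :=
      (isLittleO_one_iff ℝ).mpr tendsto_id
    have h2 := h1.mul_isBigO (isBigO_refl (fun ε : ℝ => ε ^ N) (nhds 0))
    simpa [pow_succ, mul_comm] using h2
  -- the polynomial with coefficients A is o(ε^N)
  have hFsub : (fun ε : ℝ => ∑ m ∈ Finset.range (2*N+2), A m * ε ^ m)
      =o[nhds 0] fun ε : ℝ => ε ^ N := by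
    have hdiff := hmatch.sub (hcorr.trans_isLittleO hεK)
    refine IsLittleO.congr' hdiff ?_ EventuallyEq.rfl
    refine Eventually.of_forall fun ε => ?_
    -- pointwise identity
    have part1 : ∑ m ∈ Finset.range (2*N+2),
        (∑ q ∈ (Finset.range (N+1) ×ˢ Finset.range (N+1)).filter (fun q => q.1 + q.2 = m),
          c q.1 q.2 * h ^ q.2) * ε ^ m
        = ∑ n ∈ Finset.range (N+1), ε ^ n * ∑ k ∈ Finset.range (N+1), c n k * (ε*h)^k := by
      have e1 : ∀ m ∈ Finset.range (2*N+2),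
          (∑ q ∈ (Finset.range (N+1) ×ˢ Finset.range (N+1)).filter (fun q => q.1 + q.2 = m),
            c q.1 q.2 * h ^ q.2) * ε ^ m
          = ∑ q ∈ (Finset.range (N+1) ×ˢ Finset.range (N+1)).filter (fun q => q.1 + q.2 = m),
            c q.1 q.2 * h ^ q.2 * ε ^ (q.1 + q.2) := by
        intro m _
        rw [Finset.sum_mul]
        exact Finset.sum_congr rfl fun q hq => by rw [(Finset.mem_filter.mp hq).2]
      rw [Finset.sum_congr rfl e1,
        Finset.sum_fiberwise_of_maps_to (fun q hq => ?_), Finset.sum_product]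
      · apply Finset.sum_congr rfl
        intro n _
        rw [Finset.mul_sum]
        apply Finset.sum_congr rfl
        intro k _
        rw [mul_pow, pow_add]
        ring
      · simp only [Finset.mem_product, Finset.mem_range] at hq
        simp only [Finset.mem_range]
        omega
    have part2 : ∑ m ∈ Finset.range (2*N+2),
        (if m < N + 1 then d m * h ^ m else 0) * ε ^ m
        = ∑ k ∈ Finset.range (N+1), d k * (ε*h)^k := by
      rw [Finset.sum_congr rfl (fun m _ => by rw [ite_mul, zero_mul] :
        ∀ m ∈ Finset.range (2*N+2), (if m < N + 1 then d m * h ^ m else 0) * ε ^ m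
          = if m < N + 1 then d m * h ^ m * ε ^ m else 0), ← Finset.sum_filter]
      have : (Finset.range (2*N+2)).filter (fun m => m < N + 1) = Finset.range (N+1) := by
        ext m
        simp only [Finset.mem_filter, Finset.mem_range]
        omega
      rw [this]
      apply Finset.sum_congr rfl
      intro k _
      rw [mul_pow]
      ring
    have expand : ∑ m ∈ Finset.range (2*N+2), A m * ε ^ m
        = (∑ n ∈ Finset.range (N+1), ε ^ n * ∑ k ∈ Finset.range (N+1), c n k * (ε*h)^k)
          - ∑ k ∈ Finset.range (N+1), d k * (ε*h)^k := by
      rw [← part1, ← part2, ← Finset.sum_sub_distrib]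
      apply Finset.sum_congr rfl
      intro m _
      rw [hAdef]
      ring
    show (∑ n ∈ Finset.range (N + 1), ε ^ n * w n (x + ε * h)) - g (x + ε * h)
        - ((∑ n ∈ Finset.range (N+1),
            ε ^ n * (w n (x + ε*h) - ∑ k ∈ Finset.range (N+1), c n k * (ε*h)^k))
          - (g (x + ε*h) - ∑ k ∈ Finset.range (N+1), d k * (ε*h)^k))
        = ∑ m ∈ Finset.range (2*N+2), A m * ε ^ m
    rw [expand]
    have e2 : ∑ n ∈ Finset.range (N+1), ε^n * w n (x+ε*h)
        - ∑ n ∈ Finset.range (N+1),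
            ε ^ n * (w n (x + ε*h) - ∑ k ∈ Finset.range (N+1), c n k * (ε*h)^k)
        = ∑ n ∈ Finset.range (N+1), ε ^ n * ∑ k ∈ Finset.range (N+1), c n k * (ε*h)^k := by
      rw [← Finset.sum_sub_distrib]
      exact Finset.sum_congr rfl fun n _ => by ring
    linarith [e2]
  -- extract coefficient equations
  have hE : ∀ m, m ≤ N →
      ∑ k ∈ Finset.range (m+1), c k (m-k) * h^(m-k) = d m * h^m := by
    intro m hm
    have h0 : A m = 0 := poly_coeff_zero (2*N+2) N A hFsub m hm (by omega)
    rw [hAdef] at h0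
    simp only [if_pos (by omega : m < N + 1)] at h0
    have hfib : (Finset.range (N+1) ×ˢ Finset.range (N+1)).filter (fun q => q.1 + q.2 = m)
        = Finset.HasAntidiagonal.antidiagonal m := by
      ext q
      simp only [Finset.mem_filter, Finset.mem_product, Finset.mem_range,
        Finset.HasAntidiagonal.mem_antidiagonal]
      omega
    rw [hfib, Finset.Nat.sum_antidiagonal_eq_sum_range_succ_mk] at h0
    simp only at h0
    linarith [h0]
  constructor
  · have h00 := hE 0 (Nat.zero_le N)
    rw [Finset.sum_range_one] at h00
    simp only [hcdef, hddef, Nat.sub_zero, iteratedDeriv_zero, Nat.factorial_zero,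
      Nat.cast_one, div_one, pow_zero, mul_one] at h00
    exact h00
  · intro m hm1 hmN
    have hEm := hE m hmN
    rw [Finset.sum_range_succ] at hEm
    have hlast : c m (m - m) * h ^ (m - m) = w m x := by
      simp [hcdef, Nat.sub_self, iteratedDeriv_zero]
    rw [hlast] at hEm
    have hsum : ∑ k ∈ Finset.range m, c k (m-k) * h^(m-k)
        = ∑ j ∈ Finset.Icc 1 m, (h ^ j / j.factorial) * iteratedDeriv j (w (m - j)) x := by
      rw [← Finset.sum_range_reflect]
      rw [show Finset.Icc 1 m = Finset.Ico 1 (m+1) by rw [Finset.Ico_add_one_right_eq_Icc],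
        Finset.sum_Ico_eq_sum_range]
      simp only [Nat.add_sub_cancel]
      apply Finset.sum_congr rfl
      intro i hi
      have hi' : i < m := Finset.mem_range.mp hi
      rw [show m - (m - 1 - i) = i + 1 by omega, show (1:ℕ) + i = i + 1 by omega,
        show m - (i + 1) = m - 1 - i by omega]
      rw [hcdef]
      ring
    rw [hsum] at hEm
    have hdm : d m * h ^ m = (h ^ m / m.factorial) * iteratedDeriv m g x := by
      rw [hddef]; ring
    linarith [hEm, hdm]
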